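/- Let a be an Engel element of a pronilpotent (profinite) group G. Then there exist a positive integer n and a finite set of primes π such that [x, a, a, ..., a] = 1 (n copies of a) for every x in the maximal normal pro-π' subgroup O_{π'}(G) of G. -/

import Mathlib

open scoped commutatorElement
/-- The left-normed iterated commutator `[x, y, y, ..., y]` with `n` copies of `y`. -/
def engelComm {G : Type*} [Group G] (x y : G) : ℕ → G
  | 0 => x
  | n + 1 => ⁅engelComm x y n, y⁆

/-- In a pronilpotent profinite group `G`, an element `x` belongs to the maximal normal
pro-`π'` subgroup `O_{π'}(G)` iff its image in every finite (continuous) quotient has order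
divisible by no prime in `π`. -/
def memOpiPrime {G : Type*} [Group G] [TopologicalSpace G] (π : Finset ℕ) (x : G) : Prop :=
  ∀ (N : Subgroup G) [N.Normal], IsOpen (N : Set G) →
    ∀ q ∈ π, ¬ q ∣ orderOf (QuotientGroup.mk x : G ⧸ N)

lemma engelComm_map {G H F : Type*} [Group G] [Group H] [FunLike F G H]
    [MonoidHomClass F G H] (f : F) (x y : G) (n : ℕ) :
    f (engelComm x y n) = engelComm (f x) (f y) n := by
  induction n with
  | zero => rfl
  | succ n ih => simp only [engelComm, commutatorElement_def, map_mul, map_inv, ih]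

lemma engelComm_one_left {G : Type*} [Group G] (y : G) (n : ℕ) :
    engelComm (1 : G) y n = 1 := by
  induction n with
  | zero => rfl
  | succ n ih => simp [engelComm, ih]

lemma engelComm_pi_apply {I : Type*} {f : I → Type*} [∀ i, Group (f i)]
    (x y : ∀ i, f i) (n : ℕ) (i : I) :
    engelComm x y n i = engelComm (x i) (y i) n :=
  engelComm_map (Pi.evalMonoidHom f i) x y n

lemma finNilpEngel {Q : Type*} [Group Q] [Finite Q] (hn : Group.IsNilpotent Q)
    (π : Finset ℕ) (hπ : ∀ q ∈ π, q.Prime) (a b x : Q) (n : ℕ)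
    (hb : ∀ z : Q, (∀ q ∈ π, ¬ q ∣ orderOf z) → engelComm (b * z) a n = 1)
    (hx : ∀ q ∈ π, ¬ q ∣ orderOf x) :
    engelComm x a n = 1 := by
  classical
  have hsyl : ∀ {p : ℕ} [Fact p.Prime] (P : Sylow p Q), P.Normal := by
    intro p hp P
    have : NormalizerCondition Q := @normalizerCondition_of_isNilpotent Q _ hn
    exact Sylow.normal_of_normalizerCondition this P
  let e := Sylow.directProductOfNormal hsyl
  -- reduce to components
  apply e.symm.injective
  rw [map_one, engelComm_map e.symm]
  funext p
  have hp : Fact (Nat.Prime (p : ℕ)) := ⟨Nat.prime_of_mem_primeFactors p.2⟩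
  rw [Pi.one_apply, engelComm_pi_apply]
  by_cases hpπ : (p : ℕ) ∈ π
  · -- the p-component of x is trivial
    have hxp : e.symm x p = 1 := by
      funext P
      by_contra hne
      have h1 : orderOf (e.symm x p P) ∣ orderOf x := by
        have := orderOf_map_dvd
          ((Pi.evalMonoidHom _ P).comp ((Pi.evalMonoidHom _ p).comp e.symm.toMonoidHom)) x
        exact this
      obtain ⟨k, hk⟩ := P.isPGroup' (e.symm x p P)
      obtain ⟨j, hj, hjo⟩ := (Nat.dvd_prime_pow hp.out).mp (orderOf_dvd_of_pow_eq_one hk)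
      have hj0 : j ≠ 0 := by
        intro h
        exact hne (orderOf_eq_one_iff.mp (by simp [hjo, h]))
      have hpd : (p : ℕ) ∣ orderOf (e.symm x p P) := hjo ▸ dvd_pow_self (p : ℕ) hj0
      exact hx _ hpπ (hpd.trans h1)
    rw [hxp, engelComm_one_left]
  · -- use hb with a suitable p-element
    set u := e.symm (b⁻¹ * x) with hu
    set w : ∀ q : (Nat.card Q).primeFactors, ∀ P : Sylow (q : ℕ) Q, P :=
      Pi.mulSingle p (u p) with hw
    -- w has p-power order
    have hord : ∃ k : ℕ, w ^ ((p : ℕ) ^ k) = 1 := by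
      have : ∀ P : Sylow (p : ℕ) Q, ∃ k : ℕ, (u p P) ^ ((p : ℕ) ^ k) = 1 :=
        fun P => P.isPGroup' (u p P)
      have : ∃ k : ℕ, (u p) ^ ((p : ℕ) ^ k) = 1 := by
        have _inst : Fintype (Sylow (p : ℕ) Q) := Fintype.ofFinite _
        choose f hf using this
        refine ⟨Finset.univ.sup f, ?_⟩
        funext P
        show (u p P) ^ ((p : ℕ) ^ Finset.univ.sup f) = 1
        have : orderOf (u p P) ∣ (p : ℕ) ^ Finset.univ.sup f :=
          dvd_trans (orderOf_dvd_of_pow_eq_one (hf P))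
            (pow_dvd_pow _ (Finset.le_sup (Finset.mem_univ P)))
        exact orderOf_dvd_iff_pow_eq_one.mp this
      obtain ⟨k, hk⟩ := this
      refine ⟨k, ?_⟩
      rw [hw, ← Pi.mulSingle_pow, hk, Pi.mulSingle_one]
    obtain ⟨k, hk⟩ := hord
    have hz : ∀ q ∈ π, ¬ q ∣ orderOf (e w) := by
      intro q hq hdvd
      have h1 : orderOf (e w) ∣ (p : ℕ) ^ k := by
        apply orderOf_dvd_of_pow_eq_one
        rw [← map_pow, hk, map_one]
      have hqp : q = (p : ℕ) :=
        ((Nat.prime_dvd_prime_iff_eq (hπ q hq) hp.out).mp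
          ((hπ q hq).dvd_of_dvd_pow (dvd_trans hdvd h1)))
      exact hpπ (hqp ▸ hq)
    have := hb (e w) hz
    have h2 : e.symm (engelComm (b * e w) a n) = e.symm 1 := by rw [this]
    rw [map_one, engelComm_map e.symm] at h2
    have h3 := congrFun h2 p
    rw [Pi.one_apply, engelComm_pi_apply] at h3
    have h4 : (e.symm (b * e w)) p = e.symm x p := by
      rw [map_mul, MulEquiv.symm_apply_apply]
      show e.symm b p * w p = e.symm x p
      rw [hw, Pi.mulSingle_eq_same, hu, map_mul, map_inv]
      show e.symm b p * ((e.symm b)⁻¹ p * e.symm x p) = e.symm x p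
      rw [Pi.inv_apply, mul_inv_cancel_left]
    rw [h4] at h3
    exact h3

lemma engelComm_continuous {G : Type*} [Group G] [TopologicalSpace G] [IsTopologicalGroup G]
    (a : G) (n : ℕ) : Continuous fun x : G => engelComm x a n := by
  induction n with
  | zero => exact continuous_id
  | succ n ih =>
    show Continuous fun x : G => ⁅engelComm x a n, a⁆
    simp only [commutatorElement_def]
    fun_prop

theorem stmt6 {G : Type*} [Group G] [TopologicalSpace G] [IsTopologicalGroup G]
    [CompactSpace G] [T2Space G] [TotallyDisconnectedSpace G]
    (hnil : ∀ (N : Subgroup G) [N.Normal], IsOpen (N : Set G) → Group.IsNilpotent (G ⧸ N))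
    (a : G) (ha : ∀ x : G, ∃ n : ℕ, 0 < n ∧ engelComm x a n = 1) :
    ∃ (n : ℕ) (π : Finset ℕ), 0 < n ∧ (∀ q ∈ π, q.Prime) ∧
      ∀ x : G, memOpiPrime π x → engelComm x a n = 1 := by
  classical
  set C : ℕ → Set G := fun n => {x : G | engelComm x a (n + 1) = 1} with hC
  have hclosed : ∀ n, IsClosed (C n) := fun n =>
    IsClosed.preimage (engelComm_continuous a (n + 1)) (isClosed_singleton (x := (1 : G)))
  have hcover : ⋃ n, C n = Set.univ := by
    ext x
    simp only [Set.mem_iUnion, Set.mem_univ, iff_true]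
    obtain ⟨n, hn0, hn⟩ := ha x
    obtain ⟨m, rfl⟩ := Nat.exists_eq_succ_of_ne_zero hn0.ne'
    exact ⟨m, hn⟩
  obtain ⟨m, b, hb⟩ := nonempty_interior_of_iUnion_of_closed hclosed hcover
  set n := m + 1 with hn
  have hV : IsOpen ((fun y : G => b * y) ⁻¹' interior (C m)) :=
    isOpen_interior.preimage (by fun_prop)
  have h1V : (1 : G) ∈ (fun y : G => b * y) ⁻¹' interior (C m) := by
    simpa using hb
  obtain ⟨W, hWclopen, h1W, hWV⟩ := compact_exists_isClopen_in_isOpen hV h1V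
  obtain ⟨H, hH⟩ := IsTopologicalGroup.exist_openNormalSubgroup_sub_clopen_nhds_of_one hWclopen h1W
  set N := H.toOpenSubgroup.toSubgroup with hNdef
  have hNopen : IsOpen (N : Set G) := H.toOpenSubgroup.isOpen
  have hNb : ∀ y ∈ N, engelComm (b * y) a n = 1 := by
    intro y hy
    have h7 : b * y ∈ C m := interior_subset (hWV (hH hy))
    exact h7
  haveI : Finite (G ⧸ N) := Subgroup.quotient_finite_of_isOpen _ hNopen
  have hcard : Nat.card (G ⧸ N) ≠ 0 := Nat.card_pos.ne'
  refine ⟨n, (Nat.card (G ⧸ N)).primeFactors, Nat.succ_pos m,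
    fun q hq => Nat.prime_of_mem_primeFactors hq, ?_⟩
  intro x hmem
  have key : ∀ (M : Subgroup G) (_ : M.Normal), IsOpen (M : Set G) → engelComm x a n ∈ M := by
    intro M hMn hMopen
    haveI := hMn
    set K := M ⊓ N with hKdef
    have hKopen : IsOpen (K : Set G) := hMopen.inter hNopen
    haveI : Finite (G ⧸ K) := Subgroup.quotient_finite_of_isOpen _ hKopen
    have hnilQ : Group.IsNilpotent (G ⧸ K) := hnil K hKopen
    set φ := QuotientGroup.mk' K with hφ
    have hKN : K ≤ N := inf_le_right
    have main : engelComm (φ x) (φ a) n = 1 := by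
      apply finNilpEngel hnilQ _ (fun q hq => Nat.prime_of_mem_primeFactors hq) (φ a) (φ b) (φ x) n
      · intro z hz
        obtain ⟨y, rfl⟩ := QuotientGroup.mk'_surjective K z
        have hyN : y ∈ N := by
          set ψ := QuotientGroup.map K N (MonoidHom.id G) (by simpa using hKN) with hψdef
          have hψ : ψ (φ y) = (QuotientGroup.mk y : G ⧸ N) := rfl
          have hd1 : orderOf (QuotientGroup.mk y : G ⧸ N) ∣ orderOf (φ y) :=
            hψ ▸ orderOf_map_dvd ψ (φ y)
          have hd2 : orderOf (QuotientGroup.mk y : G ⧸ N) ∣ Nat.card (G ⧸ N) :=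
            orderOf_dvd_natCard _
          by_contra hyN
          have hne : orderOf (QuotientGroup.mk y : G ⧸ N) ≠ 1 := by
            rw [Ne, orderOf_eq_one_iff, QuotientGroup.eq_one_iff]
            exact hyN
          obtain ⟨q, hqp, hqd⟩ := Nat.exists_prime_and_dvd hne
          exact hz q (Nat.mem_primeFactors.mpr ⟨hqp, hqd.trans hd2, hcard⟩) (hqd.trans hd1)
        calc engelComm (φ b * φ y) (φ a) n = φ (engelComm (b * y) a n) := by
              rw [engelComm_map, map_mul]
          _ = 1 := by rw [hNb y hyN, map_one]
      · intro q hq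
        exact hmem K hKopen q hq
    have h5 : φ (engelComm x a n) = 1 := by rw [engelComm_map]; exact main
    have h6 : engelComm x a n ∈ K := (QuotientGroup.eq_one_iff _).mp h5
    exact (inf_le_left : K ≤ M) h6
  by_contra hne
  have h1 : (1 : G) ∈ ({engelComm x a n}ᶜ : Set G) := by simp [Ne.symm hne]
  obtain ⟨W', hW'c, h1W', hW'sub⟩ :=
    compact_exists_isClopen_in_isOpen isClosed_singleton.isOpen_compl h1
  obtain ⟨M, hM⟩ := IsTopologicalGroup.exist_openNormalSubgroup_sub_clopen_nhds_of_one hW'c h1W'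
  exact hW'sub (hM (key M.toOpenSubgroup.toSubgroup inferInstance M.toOpenSubgroup.isOpen)) rfl
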